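/- Let G be a group such that ℤ[G] has finitely detectable full left ideals. Then for every n, the matrix ring M_n(ℤ[G]) has finitely detectable units: any A ∈ M_n(ℤ[G]) whose image in M_n(ℤ[G/H]) is invertible for every finite-index normal subgroup H of G is itself invertible in M_n(ℤ[G]). -/

import Mathlib

/-- `ℤ[G]` has finitely detectable full left ideals. -/
def FinitelyDetectableFullLeftIdeals (G : Type*) [Group G] : Prop :=
  ∀ I : Ideal (MonoidAlgebra ℤ G),
    (∀ (H : Subgroup G) (hN : H.Normal) (_ : H.FiniteIndex),
      Ideal.map (MonoidAlgebra.mapDomainRingHom ℤ (@QuotientGroup.mk' G _ H hN)) I = ⊤) →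
    I = ⊤

section Aux

open Matrix

variable {G : Type*} [Group G]

private lemma mapDomainRingHom_surjective (H : Subgroup G) (hN : H.Normal) :
    Function.Surjective (MonoidAlgebra.mapDomainRingHom ℤ (@QuotientGroup.mk' G _ H hN)) := by
  intro y
  have hsurj : Function.Surjective (@QuotientGroup.mk' G _ H hN) :=
    QuotientGroup.mk'_surjective H
  refine ⟨.ofCoeff (Finsupp.mapDomain (Function.surjInv hsurj) y.coeff), ?_⟩
  apply MonoidAlgebra.coeff_injective
  show Finsupp.mapDomain _ (Finsupp.mapDomain _ _) = y.coeff
  rw [← Finsupp.mapDomain_comp]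
  have : (@QuotientGroup.mk' G _ H hN) ∘ (Function.surjInv hsurj) = id := by
    funext x; exact Function.surjInv_eq hsurj x
  rw [this, Finsupp.mapDomain_id]

/-- linear map prepending a zero coordinate -/
private noncomputable def cons0 (R : Type*) [Semiring R] (m : ℕ) :
    (Fin m → R) →ₗ[R] (Fin (m + 1) → R) where
  toFun w := Fin.cons 0 w
  map_add' w w' := by
    funext i
    refine Fin.cases ?_ (fun j => ?_) i <;> simp
  map_smul' r w := by
    funext i
    refine Fin.cases ?_ (fun j => ?_) i <;> simp

/-- Key submodule lemma: a left submodule of `R^m` that surjects onto `R̄^m` for every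
finite quotient is everything. -/
private lemma submodule_detect (hG : FinitelyDetectableFullLeftIdeals G) (m : ℕ)
    (N : Submodule (MonoidAlgebra ℤ G) (Fin m → MonoidAlgebra ℤ G))
    (hN : ∀ (H : Subgroup G) (hn : H.Normal) (_ : H.FiniteIndex)
      (y : Fin m → MonoidAlgebra ℤ (G ⧸ H)), ∃ x ∈ N,
        (MonoidAlgebra.mapDomainRingHom ℤ (@QuotientGroup.mk' G _ H hn)) ∘ x = y) :
    N = ⊤ := by
  induction m with
  | zero =>
    rw [eq_top_iff]
    intro x _
    have : x = 0 := funext fun i => i.elim0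
    rw [this]; exact N.zero_mem
  | succ m ih =>
    set R := MonoidAlgebra ℤ G
    -- the ideal of first coordinates
    set I : Ideal R := N.map (LinearMap.proj (0 : Fin (m + 1))) with hI
    have hItop : I = ⊤ := by
      apply hG
      intro H hn hF
      rw [Ideal.eq_top_iff_one]
      set f := MonoidAlgebra.mapDomainRingHom ℤ (@QuotientGroup.mk' G _ H hn)
      obtain ⟨x, hxN, hx⟩ := hN H hn hF (Fin.cons 1 0)
      have hx0 : f (x 0) = 1 := by
        have := congrFun hx 0
        simpa [f] using this
      have : x 0 ∈ I := ⟨x, hxN, rfl⟩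
      exact hx0 ▸ Ideal.mem_map_of_mem f this
    -- get v ∈ N with v 0 = 1
    have h1 : (1 : R) ∈ I := hItop ▸ Submodule.mem_top
    obtain ⟨v, hvN, hv0⟩ := h1
    simp only [LinearMap.proj_apply] at hv0
    -- the submodule of tails
    set N' : Submodule R (Fin m → R) := N.comap (cons0 R m) with hN'
    have hN'top : N' = ⊤ := by
      apply ih
      intro H hn hF z
      set f := MonoidAlgebra.mapDomainRingHom ℤ (@QuotientGroup.mk' G _ H hn)
      obtain ⟨x, hxN, hx⟩ := hN H hn hF (Fin.cons 0 z)
      have hx0 : f (x 0) = 0 := by simpa [f] using congrFun hx 0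
      set u : Fin (m + 1) → R := x - x 0 • v with hu
      have huN : u ∈ N := N.sub_mem hxN (N.smul_mem _ hvN)
      have hu0 : u 0 = 0 := by simp [hu, hv0]
      refine ⟨Fin.tail u, ?_, ?_⟩
      · show Fin.cons 0 (Fin.tail u) ∈ N
        have : Fin.cons 0 (Fin.tail u) = u := by
          rw [← hu0]; exact Fin.cons_self_tail u
        rwa [this]
      · funext j
        have hxj : f (x j.succ) = z j := by simpa [f] using congrFun hx j.succ
        simp [Fin.tail, hu, hxj, hx0]
    rw [eq_top_iff]
    intro x _
    have htail : Fin.tail (x - x 0 • v) ∈ N' := hN'top ▸ Submodule.mem_top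
    have hmem : Fin.cons 0 (Fin.tail (x - x 0 • v)) ∈ N := htail
    have h0 : (x - x 0 • v) 0 = 0 := by simp [hv0]
    have heq : Fin.cons 0 (Fin.tail (x - x 0 • v)) = x - x 0 • v := by
      rw [← h0]; exact Fin.cons_self_tail _
    rw [heq] at hmem
    have := N.add_mem hmem (N.smul_mem (x 0) hvN)
    simpa using this

/-- left invertibility from the hypotheses -/
private lemma left_inv (hG : FinitelyDetectableFullLeftIdeals G) (n : ℕ)
    (A : Matrix (Fin n) (Fin n) (MonoidAlgebra ℤ G))
    (h : ∀ (H : Subgroup G) (hN : H.Normal) (_ : H.FiniteIndex),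
      IsUnit (A.map (MonoidAlgebra.mapDomainRingHom ℤ (@QuotientGroup.mk' G _ H hN)))) :
    ∃ B : Matrix (Fin n) (Fin n) (MonoidAlgebra ℤ G), B * A = 1 := by
  have hrange : LinearMap.range A.vecMulLinear = ⊤ := by
    apply submodule_detect hG
    intro H hn hF y
    set f := MonoidAlgebra.mapDomainRingHom ℤ (@QuotientGroup.mk' G _ H hn)
    obtain ⟨u, hu⟩ := (h H hn hF).exists_left_inv
    -- y = (y ᵥ* u) ᵥ* Ā ; lift y ᵥ* u coordinatewise
    have hsurj := mapDomainRingHom_surjective H hn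
    choose zlift hzlift using fun j => hsurj ((Matrix.vecMul y u) j)
    refine ⟨Matrix.vecMul zlift A, ⟨zlift, rfl⟩, ?_⟩
    funext j
    have : f ((zlift ᵥ* A) j) = ((f ∘ zlift) ᵥ* A.map f) j := RingHom.map_vecMul f A zlift j
    have hz : f ∘ zlift = y ᵥ* u := funext hzlift
    calc (f ∘ (zlift ᵥ* A)) j = ((f ∘ zlift) ᵥ* A.map f) j := this
      _ = ((y ᵥ* u) ᵥ* A.map f) j := by rw [hz]
      _ = (y ᵥ* (u * A.map f)) j := by rw [Matrix.vecMul_vecMul]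
      _ = y j := by rw [hu]; simp
  have hsurj : Function.Surjective A.vecMulLinear := by
    rw [← LinearMap.range_eq_top]; exact hrange
  choose b hb using fun i => hsurj (Pi.single i (1 : MonoidAlgebra ℤ G))
  refine ⟨Matrix.of b, ?_⟩
  ext i j
  have : (b i ᵥ* A) j = (Pi.single i 1 : Fin n → MonoidAlgebra ℤ G) j := congrFun (hb i) j
  simp only [Matrix.mul_apply, Matrix.of_apply]
  rw [show ∑ k, b i k * A k j = (b i ᵥ* A) j from rfl, this, Matrix.one_apply,
    Pi.single_apply]
  simp [eq_comm]

end Aux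

set_option maxHeartbeats 1000000 in
/-- If `ℤ[G]` has finitely detectable full left ideals then every matrix ring
`M_n(ℤ[G])` has finitely detectable units. -/
theorem stmt14 (G : Type*) [Group G] (hG : FinitelyDetectableFullLeftIdeals G)
    (n : ℕ) (A : Matrix (Fin n) (Fin n) (MonoidAlgebra ℤ G))
    (h : ∀ (H : Subgroup G) (hN : H.Normal) (_ : H.FiniteIndex),
      IsUnit (A.map (MonoidAlgebra.mapDomainRingHom ℤ (@QuotientGroup.mk' G _ H hN)))) :
    IsUnit A := by
  obtain ⟨B, hBA⟩ := left_inv hG n A h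
  have hB : ∀ (H : Subgroup G) (hN : H.Normal) (_ : H.FiniteIndex),
      IsUnit (B.map (MonoidAlgebra.mapDomainRingHom ℤ (@QuotientGroup.mk' G _ H hN))) := by
    intro H hN hF
    set f := MonoidAlgebra.mapDomainRingHom ℤ (@QuotientGroup.mk' G _ H hN)
    have hmul : B.map f * A.map f = 1 := by
      rw [← Matrix.map_mul, hBA, Matrix.map_one f (map_zero f) (map_one f)]
    obtain ⟨u, hu⟩ := h H hN hF
    have hB' := Units.inv_eq_of_mul_eq_one_left (u := u) (by rw [hu]; exact hmul)
    rw [← hB']; exact Units.isUnit _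
  obtain ⟨C, hCB⟩ := left_inv hG n B hB
  have hCA : C = A := by
    calc C = C * (B * A) := by rw [hBA, mul_one]
      _ = (C * B) * A := by rw [mul_assoc]
      _ = A := by rw [hCB, one_mul]
  have hAB : A * B = 1 := by rw [← hCA, hCB]
  exact ⟨⟨A, B, hAB, hBA⟩, rfl⟩
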